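/- Let ρ_{XE} = ∑_{x∈{0,1}^n} 2^{-n} |x⟩⟨x| ⊗ (ρ_{E_1}^{x_1} ⊗ ... ⊗ ρ_{E_n}^{x_n}) be a cq-state where each bit x_i is encoded independently in register E_i. Then the maximal probability of guessing the full string x by a measurement on E equals the product ∏_{i=1}^n P_g(X_i | ρ_{E_i}) of the single-register guessing probabilities, and is achieved by measuring each register separately. -/

import Mathlib

open scoped ComplexOrder

namespace Stmt18Aux
open Matrix
set_option linter.unusedSectionVars false

lemma tele {R : Type*} [CommRing R] : ∀ (n : ℕ) (f g : Fin n → R),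
    ∏ i, f i - ∏ i, g i =
      ∑ j, ∏ i, (if i < j then g i else if i = j then f i - g i else f i) := by
  intro n
  induction n with
  | zero => intro f g; simp
  | succ n ih =>
    intro f g
    rw [Fin.prod_univ_succ f, Fin.prod_univ_succ g, Fin.sum_univ_succ]
    have h0 : ∏ i, (if i < (0 : Fin (n+1)) then g i else if i = 0 then f i - g i else f i)
        = (f 0 - g 0) * ∏ i : Fin n, f i.succ := by
      rw [Fin.prod_univ_succ]
      simp [Fin.succ_ne_zero]
    have h1 : ∀ j : Fin n, (∏ i, (if i < j.succ then g i else if i = j.succ then f i - g i else f i))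
        = g 0 * ∏ i : Fin n, (if i < j then g i.succ else if i = j then f i.succ - g i.succ else f i.succ) := by
      intro j
      rw [Fin.prod_univ_succ]
      rw [if_pos j.succ_pos]
      congr 1
      refine Finset.prod_congr rfl fun i _ => ?_
      simp [Fin.succ_lt_succ_iff, Fin.succ_inj]
    rw [h0, Finset.sum_congr rfl fun j _ => h1 j, ← Finset.mul_sum,
      ← ih (fun i => f i.succ) (fun i => g i.succ)]
    ring


variable {m : Type*} [Fintype m] [DecidableEq m]

lemma psd_trace_nonneg {M : Matrix m m ℂ} (hM : M.PosSemidef) : 0 ≤ M.trace := by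
  rw [Matrix.trace]
  apply Finset.sum_nonneg
  intro k _
  have := hM.dotProduct_mulVec_nonneg (Pi.single k 1)
  simpa [dotProduct, Matrix.mulVec, Pi.single_apply] using this

lemma psd_trace_mul_nonneg {A B : Matrix m m ℂ} (hA : A.PosSemidef) (hB : B.PosSemidef) :
    0 ≤ (A * B).trace := by
  obtain ⟨C, hC⟩ := (by open scoped MatrixOrder in exact CStarAlgebra.nonneg_iff_eq_star_mul_self.mp hB.nonneg : ∃ C : Matrix m m ℂ, B = Cᴴ * C)
  have h1 : (A * B).trace = (C * A * Cᴴ).trace := by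
    rw [hC, ← Matrix.mul_assoc, Matrix.trace_mul_comm, Matrix.mul_assoc]
  rw [h1]
  exact psd_trace_nonneg (hA.mul_mul_conjTranspose_same C)

lemma psd_trace_mul_real {A B : Matrix m m ℂ} (hA : A.PosSemidef) (hB : B.PosSemidef) :
    (A * B).trace = (((A * B).trace.re : ℝ) : ℂ) ∧ 0 ≤ (A * B).trace.re := by
  have h := psd_trace_mul_nonneg hA hB
  rw [Complex.le_def] at h
  constructor
  · exact Complex.ext (by simp) (by simpa using h.2.symm)
  · simpa using h.1

lemma psd_smul_real {A : Matrix m m ℂ} (hA : A.PosSemidef) (c : ℝ) (hc : 0 ≤ c) :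
    ((c : ℂ) • A).PosSemidef := by
  refine Matrix.PosSemidef.of_dotProduct_mulVec_nonneg ?_ ?_
  · have : ((c:ℂ) • A)ᴴ = (starRingEnd ℂ) (c:ℂ) • Aᴴ := Matrix.conjTranspose_smul _ _
    rw [Matrix.IsHermitian, this, hA.1]
    simp
  · intro x
    have h0 := hA.dotProduct_mulVec_nonneg x
    have : dotProduct (star x) (((c:ℂ) • A) *ᵥ x)
        = (c:ℂ) * dotProduct (star x) (A *ᵥ x) := by
      rw [Matrix.smul_mulVec, dotProduct_smul, smul_eq_mul]
    rw [this]
    exact mul_nonneg (by exact_mod_cast Complex.zero_le_real.mpr hc) h0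


section mf
variable {d : ℕ} {A : Matrix (Fin d) (Fin d) ℂ} (hA : A.IsHermitian)

noncomputable def mf (hA : A.IsHermitian) (f : ℝ → ℝ) : Matrix (Fin d) (Fin d) ℂ :=
  (hA.eigenvectorUnitary : Matrix (Fin d) (Fin d) ℂ) *
    Matrix.diagonal (fun i => ((f (hA.eigenvalues i) : ℝ) : ℂ)) *
    (star (hA.eigenvectorUnitary : Matrix (Fin d) (Fin d) ℂ))

lemma star_mul_self_eigU : (star (hA.eigenvectorUnitary : Matrix (Fin d) (Fin d) ℂ)) *
    (hA.eigenvectorUnitary : Matrix (Fin d) (Fin d) ℂ) = 1 := by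
  exact Matrix.UnitaryGroup.star_mul_self _

lemma mf_mul (f g : ℝ → ℝ) : mf hA f * mf hA g = mf hA (fun x => f x * g x) := by
  unfold mf
  simp only [Matrix.mul_assoc]
  rw [← Matrix.mul_assoc (star (hA.eigenvectorUnitary : Matrix (Fin d) (Fin d) ℂ))
        (hA.eigenvectorUnitary : Matrix (Fin d) (Fin d) ℂ), star_mul_self_eigU hA,
      Matrix.one_mul, ← Matrix.mul_assoc (Matrix.diagonal _) (Matrix.diagonal _),
      Matrix.diagonal_mul_diagonal]
  congr 2
  funext i
  push_cast
  ring

lemma mf_add (f g : ℝ → ℝ) : mf hA f + mf hA g = mf hA (fun x => f x + g x) := by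
  unfold mf
  rw [← Matrix.add_mul, ← Matrix.mul_add, Matrix.diagonal_add]
  congr 3
  funext i
  push_cast
  ring

lemma mf_sub (f g : ℝ → ℝ) : mf hA f - mf hA g = mf hA (fun x => f x - g x) := by
  unfold mf
  rw [← Matrix.sub_mul, ← Matrix.mul_sub, Matrix.diagonal_sub]
  congr 3
  funext i
  push_cast
  ring

lemma mf_smul (c : ℝ) (f : ℝ → ℝ) : (c : ℂ) • mf hA f = mf hA (fun x => c * f x) := by
  unfold mf
  rw [← Matrix.smul_mul, ← Matrix.mul_smul,
    show (c:ℂ) • (Matrix.diagonal fun i => ((f (hA.eigenvalues i) : ℝ) : ℂ))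
      = Matrix.diagonal fun i => ((c * f (hA.eigenvalues i) : ℝ) : ℂ) from by
        ext i j
        by_cases h : i = j <;> simp [Matrix.diagonal_apply, h]]

lemma mf_id : mf hA (fun x => x) = A := by
  conv_rhs => rw [hA.spectral_theorem]
  rfl

lemma mf_psd {f : ℝ → ℝ} (hf : ∀ x, 0 ≤ f x) : (mf hA f).PosSemidef := by
  unfold mf
  rw [Matrix.star_eq_conjTranspose (hA.eigenvectorUnitary : Matrix (Fin d) (Fin d) ℂ)]
  exact Matrix.PosSemidef.mul_mul_conjTranspose_same
    (Matrix.PosSemidef.diagonal fun i => by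
      simpa using Complex.zero_le_real.mpr (hf _)) _

lemma mf_trace (f : ℝ → ℝ) : (mf hA f).trace = ((∑ i, f (hA.eigenvalues i) : ℝ) : ℂ) := by
  unfold mf
  rw [Matrix.trace_mul_cycle, star_mul_self_eigU hA, Matrix.one_mul, Matrix.trace_diagonal]
  push_cast
  rfl

lemma mf_one : mf hA (fun _ => 1) = 1 := by
  unfold mf
  rw [show (Matrix.diagonal fun _ : Fin d => (((1:ℝ)) : ℂ)) = (1 : Matrix (Fin d) (Fin d) ℂ) by
      simp [Matrix.diagonal_one], Matrix.mul_one]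
  exact Matrix.mem_unitaryGroup_iff.mp (hA.eigenvectorUnitary).2

end mf



lemma single {d : ℕ} (ρb : Bool → Matrix (Fin d) (Fin d) ℂ)
    (hpsd : ∀ b, (ρb b).PosSemidef) (htr : ∀ b, (ρb b).trace = 1) :
    ∃ t : ℝ,
      IsGreatest {p : ℝ | ∃ N : Bool → Matrix (Fin d) (Fin d) ℂ,
        (∀ b, (N b).PosSemidef) ∧ (N false + N true = 1) ∧
        p = ∑ b, (1 / 2) * ((N b * ρb b).trace).re} t ∧
      ∃ Q : Matrix (Fin d) (Fin d) ℂ, Q.PosSemidef ∧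
        (∀ b, (Q - (1/2 : ℂ) • ρb b).PosSemidef) ∧ Q.trace = (t : ℂ) := by
  have hΔ : (ρb false - ρb true).IsHermitian := ((hpsd false).1).sub ((hpsd true).1)
  have hc2 : ((1/2 : ℂ)) = (((1/2 : ℝ)) : ℂ) := by norm_num
  have hc4 : ((1/4 : ℂ)) = (((1/4 : ℝ)) : ℂ) := by norm_num
  have hsum0 : ∑ i, hΔ.eigenvalues i = 0 := by
    have h1 : (mf hΔ fun x => x).trace = ((∑ i, hΔ.eigenvalues i : ℝ) : ℂ) := mf_trace hΔ _
    rw [mf_id] at h1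
    have h2 : (ρb false - ρb true).trace = 0 := by
      rw [Matrix.trace_sub, htr, htr, sub_self]
    rw [h2] at h1
    exact_mod_cast h1.symm
  have hs2 : ∑ i, max (-hΔ.eigenvalues i) 0 = ∑ i, max (hΔ.eigenvalues i) 0 := by
    have h3 : ∑ i, (max (hΔ.eigenvalues i) 0 - max (-hΔ.eigenvalues i) 0)
        = ∑ i, hΔ.eigenvalues i := by
      refine Finset.sum_congr rfl fun i _ => ?_
      rcases le_total 0 (hΔ.eigenvalues i) with h | h
      · rw [max_eq_left h, max_eq_right (by linarith)]; ring
      · rw [max_eq_right h, max_eq_left (by linarith)]; ring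
    rw [Finset.sum_sub_distrib, hsum0] at h3
    linarith
  refine ⟨1/2 + 1/2 * ∑ i, max (hΔ.eigenvalues i) 0, ?_⟩
  set Q : Matrix (Fin d) (Fin d) ℂ :=
    (1/4 : ℂ) • (ρb false + ρb true + mf hΔ (fun x => |x|)) with hQdef
  have hQpsd : Q.PosSemidef := by
    rw [hQdef, hc4]
    exact psd_smul_real (((hpsd false).add (hpsd true)).add (mf_psd hΔ fun x => abs_nonneg x))
      (1/4) (by norm_num)
  have hQsub : ∀ b, (Q - (1/2 : ℂ) • ρb b).PosSemidef := by
    intro b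
    cases b
    · have e1 : Q - (1/2 : ℂ) • ρb false
          = (1/4 : ℂ) • (mf hΔ (fun x => |x|) - mf hΔ (fun x => x)) := by
        rw [mf_id, hQdef]
        module
      rw [e1, mf_sub, hc4, mf_smul]
      exact mf_psd hΔ fun x => by
        have h := le_abs_self x
        nlinarith
    · have e1 : Q - (1/2 : ℂ) • ρb true
          = (1/4 : ℂ) • (mf hΔ (fun x => |x|) + mf hΔ (fun x => x)) := by
        rw [mf_id, hQdef]
        module
      rw [e1, mf_add, hc4, mf_smul]
      exact mf_psd hΔ fun x => by
        have h := neg_abs_le x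
        nlinarith
  have hQtr : Q.trace = ((1/2 + 1/2 * ∑ i, max (hΔ.eigenvalues i) 0 : ℝ) : ℂ) := by
    have habs : ∑ i, |hΔ.eigenvalues i| = 2 * ∑ i, max (hΔ.eigenvalues i) 0 := by
      have h4 : ∀ i : Fin d, |hΔ.eigenvalues i|
          = max (hΔ.eigenvalues i) 0 + max (-hΔ.eigenvalues i) 0 := by
        intro i
        rcases le_total 0 (hΔ.eigenvalues i) with h | h
        · rw [abs_of_nonneg h, max_eq_left h, max_eq_right (by linarith)]; ring
        · rw [abs_of_nonpos h, max_eq_right h, max_eq_left (by linarith)]; ring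
      rw [Finset.sum_congr rfl fun i _ => h4 i, Finset.sum_add_distrib, hs2]
      ring
    rw [hQdef, Matrix.trace_smul, Matrix.trace_add, Matrix.trace_add, htr, htr,
      mf_trace hΔ (fun x => |x|), habs]
    rw [smul_eq_mul]
    push_cast
    ring
  set pf : ℝ → ℝ := fun x => if 0 ≤ x then 1 else 0 with hpf
  have hpf_nonneg : ∀ x, 0 ≤ pf x := by
    intro x
    rw [hpf]
    dsimp only
    split <;> norm_num
  set N : Bool → Matrix (Fin d) (Fin d) ℂ :=
    fun b => if b then 1 - mf hΔ pf else mf hΔ pf with hN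
  have hNf : N false = mf hΔ pf := by simp [hN]
  have hNt : N true = 1 - mf hΔ pf := by simp [hN]
  have hNpsd : ∀ b, (N b).PosSemidef := by
    intro b
    cases b
    · rw [hNf]; exact mf_psd hΔ hpf_nonneg
    · rw [hNt, ← mf_one hΔ, mf_sub]
      refine mf_psd hΔ fun x => ?_
      have := hpf_nonneg x
      have h1 : pf x ≤ 1 := by rw [hpf]; dsimp only; split <;> norm_num
      linarith
  have hNsum : N false + N true = 1 := by
    rw [hNf, hNt]
    abel
  have hval : (∑ b, (1 / 2 : ℝ) * ((N b * ρb b).trace).re)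
      = 1/2 + 1/2 * ∑ i, max (hΔ.eigenvalues i) 0 := by
    have e0 := mf_mul hΔ pf (fun x => x)
    rw [mf_id hΔ] at e0
    have e1 : (fun x => pf x * x) = fun x => max x 0 := by
      funext x
      rw [hpf]
      dsimp only
      split
      · rw [one_mul, max_eq_left ‹0 ≤ x›]
      · rw [zero_mul, max_eq_right (le_of_lt (not_le.mp ‹¬ 0 ≤ x›))]
    rw [e1] at e0
    have e : (N true * ρb true).trace + (N false * ρb false).trace
        = 1 + ((∑ i, max (hΔ.eigenvalues i) 0 : ℝ) : ℂ) := by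
      rw [hNf, hNt, Matrix.sub_mul, Matrix.one_mul, Matrix.trace_sub]
      have e2 : (ρb true).trace - (mf hΔ pf * ρb true).trace + (mf hΔ pf * ρb false).trace
          = (ρb true).trace + (mf hΔ pf * (ρb false - ρb true)).trace := by
        rw [Matrix.mul_sub, Matrix.trace_sub]; ring
      rw [e2, e0, htr, mf_trace hΔ (fun x => max x 0)]
    rw [Fintype.sum_bool]
    have e3 : (1/2 : ℝ) * ((N true * ρb true).trace).re
          + (1/2 : ℝ) * ((N false * ρb false).trace).re
        = (1/2 : ℝ) * (((N true * ρb true).trace + (N false * ρb false).trace).re) := by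
      rw [Complex.add_re]; ring
    rw [e3, e]
    have e4 : ((1 : ℂ) + ((∑ i, max (hΔ.eigenvalues i) 0 : ℝ) : ℂ)).re
        = 1 + ∑ i, max (hΔ.eigenvalues i) 0 := by
      simp
    rw [e4]; ring
  refine ⟨⟨⟨N, hNpsd, hNsum, hval.symm⟩, ?_⟩, Q, hQpsd, hQsub, hQtr⟩
  rintro p ⟨M, hM1, hM2, rfl⟩
  have key : ∀ b, (1/2 : ℝ) * ((M b * ρb b).trace).re ≤ ((M b * Q).trace).re := by
    intro b
    have h0 : 0 ≤ ((M b * (Q - (1/2:ℂ) • ρb b)).trace).re :=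
      (psd_trace_mul_real (hM1 b) (hQsub b)).2
    have e : (M b * (Q - (1/2:ℂ) • ρb b)).trace
        = (M b * Q).trace - (1/2:ℂ) * (M b * ρb b).trace := by
      rw [Matrix.mul_sub, Matrix.trace_sub]
      congr 1
      rw [Matrix.mul_smul, Matrix.trace_smul, smul_eq_mul]
    rw [e, Complex.sub_re, hc2, Complex.re_ofReal_mul] at h0
    linarith
  calc ∑ b, (1/2 : ℝ) * ((M b * ρb b).trace).re
      ≤ ∑ b, ((M b * Q).trace).re := Finset.sum_le_sum fun b _ => key b
    _ = 1/2 + 1/2 * ∑ i, max (hΔ.eigenvalues i) 0 := by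
        rw [Fintype.sum_bool, ← Complex.add_re, ← Matrix.trace_add, ← Matrix.add_mul]
        rw [show M true + M false = 1 from by rw [← hM2]; abel, Matrix.one_mul, hQtr]
        simp


variable {n : ℕ} {D : Fin n → ℕ}

def kron (C : (i : Fin n) → Matrix (Fin (D i)) (Fin (D i)) ℂ) :
    Matrix ((i : Fin n) → Fin (D i)) ((i : Fin n) → Fin (D i)) ℂ :=
  Matrix.of fun k l => ∏ i, C i (k i) (l i)

lemma kron_mul (C C' : (i : Fin n) → Matrix (Fin (D i)) (Fin (D i)) ℂ) :
    kron C * kron C' = kron (fun i => C i * C' i) := by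
  ext k l
  simp only [kron, Matrix.mul_apply, Matrix.of_apply]
  rw [Finset.prod_univ_sum, Fintype.piFinset_univ]
  exact Finset.sum_congr rfl fun m _ => Finset.prod_mul_distrib.symm

lemma kron_trace (C : (i : Fin n) → Matrix (Fin (D i)) (Fin (D i)) ℂ) :
    (kron C).trace = ∏ i, (C i).trace := by
  simp only [Matrix.trace, Matrix.diag, kron, Matrix.of_apply]
  rw [Finset.prod_univ_sum]
  rw [Fintype.piFinset_univ]

lemma kron_conjTranspose (C : (i : Fin n) → Matrix (Fin (D i)) (Fin (D i)) ℂ) :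
    (kron C)ᴴ = kron (fun i => (C i)ᴴ) := by
  ext k l
  simp [kron, Matrix.conjTranspose_apply, map_prod]

lemma kron_posSemidef {C : (i : Fin n) → Matrix (Fin (D i)) (Fin (D i)) ℂ}
    (h : ∀ i, (C i).PosSemidef) : (kron C).PosSemidef := by
  have : ∀ i, ∃ B : Matrix (Fin (D i)) (Fin (D i)) ℂ, C i = Bᴴ * B :=
    fun i => (by open scoped MatrixOrder in exact CStarAlgebra.nonneg_iff_eq_star_mul_self.mp (h i).nonneg : ∃ B : Matrix (Fin (D i)) (Fin (D i)) ℂ, C i = Bᴴ * B)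
  choose B hB using this
  have : kron C = (kron B)ᴴ * kron B := by
    rw [kron_conjTranspose, kron_mul]
    exact congrArg kron (funext fun j => hB j)
  rw [this]
  exact posSemidef_conjTranspose_mul_self _

end Stmt18Aux

open Stmt18Aux in
/-- For a cq-state encoding each bit `x i` of a uniformly random string `x ∈ {0,1}^n`
independently into register `E_i` (state `ρ i (x i)`), the maximal probability of guessing
the full string by a measurement on `E = E_1 ⊗ ⋯ ⊗ E_n` equals the product of the
single-register guessing probabilities, and it is achieved by measuring each register
separately (i.e. by a product measurement). -/
theorem stmt_18 (n : ℕ) (D : Fin n → ℕ)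
    (ρ : (i : Fin n) → Bool → Matrix (Fin (D i)) (Fin (D i)) ℂ)
    (hρ : ∀ i b, (ρ i b).PosSemidef ∧ (ρ i b).trace = 1) :
    IsGreatest {p : ℝ |
        ∃ M : (Fin n → Bool) →
            Matrix ((i : Fin n) → Fin (D i)) ((i : Fin n) → Fin (D i)) ℂ,
          (∀ x, (M x).PosSemidef) ∧ (∑ x, M x = 1) ∧
          p = ∑ x, (1 / 2 ^ n) *
            ((M x *
              Matrix.of (fun (k l : (i : Fin n) → Fin (D i)) => ∏ i, ρ i (x i) (k i) (l i))).trace).re}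
      (∏ i, sSup {p : ℝ | ∃ N : Bool → Matrix (Fin (D i)) (Fin (D i)) ℂ,
          (∀ b, (N b).PosSemidef) ∧ (N false + N true = 1) ∧
          p = ∑ b, (1 / 2) * ((N b * ρ i b).trace).re}) ∧
    ∃ M : (i : Fin n) → Bool → Matrix (Fin (D i)) (Fin (D i)) ℂ,
      (∀ i b, (M i b).PosSemidef) ∧ (∀ i, M i false + M i true = 1) ∧
      (∑ x : Fin n → Bool, (1 / 2 ^ n) *
          ((Matrix.of (fun (k l : (i : Fin n) → Fin (D i)) => ∏ i, M i (x i) (k i) (l i)) *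
            Matrix.of (fun (k l : (i : Fin n) → Fin (D i)) => ∏ i, ρ i (x i) (k i) (l i))).trace).re)
        = ∏ i, sSup {p : ℝ | ∃ N : Bool → Matrix (Fin (D i)) (Fin (D i)) ℂ,
            (∀ b, (N b).PosSemidef) ∧ (N false + N true = 1) ∧
            p = ∑ b, (1 / 2) * ((N b * ρ i b).trace).re} := by
  classical
  choose t hbig using fun i => single (ρ i) (fun b => (hρ i b).1) (fun b => (hρ i b).2)
  have hG : ∀ i, IsGreatest {p : ℝ | ∃ N : Bool → Matrix (Fin (D i)) (Fin (D i)) ℂ,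
      (∀ b, (N b).PosSemidef) ∧ (N false + N true = 1) ∧
      p = ∑ b, (1 / 2) * ((N b * ρ i b).trace).re} (t i) := fun i => (hbig i).1
  choose Q hQ1 hQ2 hQ3 using fun i => (hbig i).2
  choose N hN1 hN2 hN3 using fun i => (hG i).1
  have hrw : (∏ i, sSup {p : ℝ | ∃ N : Bool → Matrix (Fin (D i)) (Fin (D i)) ℂ,
      (∀ b, (N b).PosSemidef) ∧ (N false + N true = 1) ∧
      p = ∑ b, (1 / 2) * ((N b * ρ i b).trace).re}) = ∏ i, t i :=
    Finset.prod_congr rfl fun i _ => (hG i).csSup_eq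
  rw [hrw]
  have hpow : ((1:ℝ)/2)^n = 1/2^n := by rw [div_pow, one_pow]
  -- the value of the product measurement
  have hval : (∑ x : Fin n → Bool, (1 / 2 ^ n : ℝ) *
      ((Matrix.of (fun (k l : (i : Fin n) → Fin (D i)) => ∏ i, N i (x i) (k i) (l i)) *
        Matrix.of (fun (k l : (i : Fin n) → Fin (D i)) => ∏ i, ρ i (x i) (k i) (l i))).trace).re)
      = ∏ i, t i := by
    have h1 : ∀ x : Fin n → Bool,
        ((Matrix.of (fun (k l : (i : Fin n) → Fin (D i)) => ∏ i, N i (x i) (k i) (l i)) *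
          Matrix.of (fun (k l : (i : Fin n) → Fin (D i)) => ∏ i, ρ i (x i) (k i) (l i))).trace)
        = (((∏ i, ((N i (x i) * ρ i (x i)).trace).re : ℝ)) : ℂ) := by
      intro x
      have e : (Matrix.of (fun (k l : (i : Fin n) → Fin (D i)) => ∏ i, N i (x i) (k i) (l i)) *
          Matrix.of (fun (k l : (i : Fin n) → Fin (D i)) => ∏ i, ρ i (x i) (k i) (l i)))
          = kron (fun i => N i (x i)) * kron (fun i => ρ i (x i)) := rfl
      rw [e, kron_mul, kron_trace]
      rw [Finset.prod_congr rfl fun i (_ : i ∈ Finset.univ) =>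
        (psd_trace_mul_real (hN1 i (x i)) (hρ i (x i)).1).1]
      rw [Complex.ofReal_prod]
    calc ∑ x : Fin n → Bool, (1 / 2 ^ n : ℝ) *
          ((Matrix.of (fun (k l : (i : Fin n) → Fin (D i)) => ∏ i, N i (x i) (k i) (l i)) *
            Matrix.of (fun (k l : (i : Fin n) → Fin (D i)) => ∏ i, ρ i (x i) (k i) (l i))).trace).re
        = ∑ x : Fin n → Bool, ∏ i, ((1/2 : ℝ) * ((N i (x i) * ρ i (x i)).trace).re) := by
          refine Finset.sum_congr rfl fun x _ => ?_
          rw [h1 x, Complex.ofReal_re, Finset.prod_mul_distrib, Finset.prod_const,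
            Finset.card_univ, Fintype.card_fin, hpow]
      _ = ∏ i, ∑ b, (1/2 : ℝ) * ((N i b * ρ i b).trace).re := by
          rw [← Fintype.piFinset_univ]
          exact (Finset.prod_univ_sum (fun _ => Finset.univ)
            (fun i b => (1/2 : ℝ) * ((N i b * ρ i b).trace).re)).symm
      _ = ∏ i, t i := Finset.prod_congr rfl fun i _ => (hN3 i).symm
  constructor
  · constructor
    · -- membership via product measurement
      refine ⟨fun x => kron (fun i => N i (x i)),
        fun x => kron_posSemidef fun i => hN1 i (x i), ?_, hval.symm⟩
      ext k l
      rw [Matrix.sum_apply]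
      have e : ∀ x : Fin n → Bool,
          kron (fun i => N i (x i)) k l = ∏ i, N i (x i) (k i) (l i) := fun _ => rfl
      calc ∑ x : Fin n → Bool, kron (fun i => N i (x i)) k l
          = ∑ x : Fin n → Bool, ∏ i, N i (x i) (k i) (l i) :=
            Finset.sum_congr rfl fun x _ => e x
        _ = ∏ i, ∑ b, N i b (k i) (l i) := by
            rw [← Fintype.piFinset_univ]
            exact (Finset.prod_univ_sum (fun _ => Finset.univ)
              (fun i b => N i b (k i) (l i))).symm
        _ = ∏ i, (1 : Matrix (Fin (D i)) (Fin (D i)) ℂ) (k i) (l i) := by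
            refine Finset.prod_congr rfl fun i _ => ?_
            rw [Fintype.sum_bool, ← Matrix.add_apply, show N i true + N i false = 1 from by
              rw [← hN2 i]; abel]
        _ = (1 : Matrix ((i : Fin n) → Fin (D i)) ((i : Fin n) → Fin (D i)) ℂ) k l := by
            by_cases h : k = l
            · subst h; simp [Matrix.one_apply]
            · obtain ⟨i, hi⟩ := Function.ne_iff.mp h
              rw [Matrix.one_apply_ne h]
              exact Finset.prod_eq_zero (Finset.mem_univ i) (Matrix.one_apply_ne hi)
    · -- upper bound
      rintro p ⟨M, hM1, hM2, rfl⟩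
      have hc2 : ((1/2 : ℂ)) = (((1/2 : ℝ)) : ℂ) := by norm_num
      have step : ∀ x : Fin n → Bool,
          (1 / 2 ^ n : ℝ) * ((M x * kron (fun i => ρ i (x i))).trace).re
            ≤ ((M x * kron Q).trace).re := by
        intro x
        set g : (i : Fin n) → Matrix (Fin (D i)) (Fin (D i)) ℂ :=
          fun i => (1/2 : ℂ) • ρ i (x i) with hg
        have hgpsd : ∀ i, (g i).PosSemidef := by
          intro i
          rw [hg]
          dsimp only
          rw [hc2]
          exact psd_smul_real (hρ i (x i)).1 (1/2) (by norm_num)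
        -- scaling identity
        have hkg : (M x * kron g).trace = ((1/2 : ℂ))^n * (M x * kron (fun i => ρ i (x i))).trace := by
          have e : kron g = ((1/2 : ℂ)^n) • kron (fun i => ρ i (x i)) := by
            ext k l
            show (∏ i, g i (k i) (l i)) = ((1/2:ℂ)^n) • (∏ i, ρ i (x i) (k i) (l i))
            rw [hg]
            simp only [Matrix.smul_apply, smul_eq_mul, Finset.prod_mul_distrib,
              Finset.prod_const, Finset.card_univ, Fintype.card_fin]
          rw [e, Matrix.mul_smul, Matrix.trace_smul, smul_eq_mul]
        -- telescoping
        have tel : kron Q - kron g = ∑ j, kron (fun i =>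
            if i < j then g i else if i = j then Q i - g i else Q i) := by
          ext k l
          rw [Matrix.sub_apply, Matrix.sum_apply]
          have e := tele n (fun i => Q i (k i) (l i)) (fun i => g i (k i) (l i))
          show (∏ i, Q i (k i) (l i)) - (∏ i, g i (k i) (l i)) = _
          rw [e]
          refine Finset.sum_congr rfl fun j _ => ?_
          show _ = ∏ i, (if i < j then g i else if i = j then Q i - g i else Q i) (k i) (l i)
          refine Finset.prod_congr rfl fun i _ => ?_
          split_ifs with h1 h2 <;> rfl
        have hpos : ∀ j : Fin n, 0 ≤ ((M x * kron (fun i =>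
            if i < j then g i else if i = j then Q i - g i else Q i)).trace).re := by
          intro j
          refine (psd_trace_mul_real (hM1 x) (kron_posSemidef fun i => ?_)).2
          split_ifs with h1 h2
          · exact hgpsd i
          · exact hQ2 i (x i)
          · exact hQ1 i
        have hdiff : ((M x * kron Q).trace).re - ((M x * kron g).trace).re
            = ∑ j : Fin n, ((M x * kron (fun i =>
                if i < j then g i else if i = j then Q i - g i else Q i)).trace).re := by
          rw [← Complex.sub_re, ← Matrix.trace_sub, ← Matrix.mul_sub, tel, Finset.mul_sum,
            Matrix.trace_sum, Complex.re_sum]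
        have h5 : (1 / 2 ^ n : ℝ) * ((M x * kron (fun i => ρ i (x i))).trace).re
            = ((M x * kron g).trace).re := by
          rw [hkg, show ((1/2:ℂ))^n = (((1/2:ℝ)^n : ℝ) : ℂ) from by push_cast; ring,
            Complex.re_ofReal_mul, hpow]
        rw [h5]
        have := Finset.sum_nonneg fun j (_ : j ∈ Finset.univ) => hpos j
        linarith [hdiff ▸ this]
      calc ∑ x : Fin n → Bool, (1 / 2 ^ n : ℝ) *
            ((M x * Matrix.of (fun (k l : (i : Fin n) → Fin (D i)) =>
              ∏ i, ρ i (x i) (k i) (l i))).trace).re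
          ≤ ∑ x : Fin n → Bool, ((M x * kron Q).trace).re :=
            Finset.sum_le_sum fun x _ => step x
        _ = (((∑ x : Fin n → Bool, M x) * kron Q).trace).re := by
            rw [Finset.sum_mul, Matrix.trace_sum, Complex.re_sum]
        _ = ((kron Q).trace).re := by rw [hM2, Matrix.one_mul]
        _ = ∏ i, t i := by
            rw [kron_trace, Finset.prod_congr rfl fun i (_ : i ∈ Finset.univ) => hQ3 i,
              ← Complex.ofReal_prod, Complex.ofReal_re]
  · exact ⟨N, hN1, hN2, hval⟩
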